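/- For a finite set of 2n distinct elements arranged in a list l = (a, b_0, …, b_{2n-2}), pairing the list by reflection P_i(l) = {l_i, l_{2n-1-i}}, and letting l^k be the list after applying the first k adjacent cyclic transpositions moving the distinguished element a forward, the union over 0 ≤ k ≤ 2n(2n−1) of the sets of quartets formed as unions of two distinct pairs of P(l^k) contains every 4-element subset that includes a. -/

import Mathlib

/-- The list after `k` adjacent cyclic transpositions: `cycList l k = s_k(l)`
where `s_k = τ_{k,k+1} ∘ ⋯ ∘ τ_{1,2}` and `τ_{j,j+1}` swaps the `j`-th and
`(j+1)`-th positions (indices mod `2n`); this moves the distinguished element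
`l 0` forward cyclically by `k` positions. -/
def cycList {n : ℕ} {α : Type*} (l : ZMod (2 * n) → α) : ℕ → ZMod (2 * n) → α
  | 0 => l
  | k + 1 => (cycList l k) ∘ (Equiv.swap ((k : ℕ) : ZMod (2 * n)) ((k + 1 : ℕ) : ZMod (2 * n)))

/-- The reflection pairing `P(l) = { {l_i, l_{2n-1-i}} }`; in `ZMod (2n)`
arithmetic the partner of index `i` is `-1 - i`. -/
def pairing {n : ℕ} {α : Type*} [DecidableEq α] (l : ZMod (2 * n) → α) :
    Set (Finset α) :=
  {s | ∃ i : ZMod (2 * n), s = {l i, l (-1 - i)}}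

/-- The quartets `F(l)`: unions of two distinct pairs of `P(l)`. -/
def quartets {n : ℕ} {α : Type*} [DecidableEq α] (l : ZMod (2 * n) → α) :
    Set (Finset α) :=
  {t | ∃ p ∈ pairing l, ∃ q ∈ pairing l, p ≠ q ∧ t = p ∪ q}

/-- element index occupying position `i` after `q` laps and `r` extra steps -/
def F (n q r i : ℕ) : ℕ :=
  if i = r then 0 else if i < r then (i + q) % (2*n-1) + 1 else (i - 1 + q) % (2*n-1) + 1

private lemma modeq_aux (M a b : ℕ) (h : a = b ∨ a = b + M ∨ b = a + M) :
    a % M + 1 = b % M + 1 := by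
  rcases h with h | h | h <;> subst h <;> simp [Nat.add_mod_right]

lemma Fstep (n : ℕ) (hn : 0 < n) (k j : ℕ) (hj : j < 2*n) :
    F n ((k+1)/(2*n)) ((k+1)%(2*n)) j =
      F n (k/(2*n)) (k%(2*n))
        (if j = k % (2*n) then (k+1) % (2*n) else if j = (k+1) % (2*n) then k % (2*n) else j) := by
  have hN : 0 < 2*n := by omega
  set N := 2*n with hNdef
  have hk := Nat.div_add_mod k N
  have hr : k % N < N := Nat.mod_lt _ hN
  set q := k / N with hq
  set r := k % N with hrdef
  rcases Nat.lt_or_ge (r+1) N with h | h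
  · have e1 : (k+1) % N = r + 1 := by
      rw [← hk, Nat.add_assoc, Nat.mul_add_mod]; exact Nat.mod_eq_of_lt h
    have e2 : (k+1) / N = q := by
      rw [← hk, Nat.add_assoc, Nat.mul_add_div hN, Nat.div_eq_of_lt h, Nat.add_zero]
    rw [e1, e2]
    unfold F
    split_ifs <;> first | rfl | omega | (apply modeq_aux; omega)
  · have hrN : r = N - 1 := by omega
    have e0 : k + 1 = N * (q+1) := by rw [Nat.mul_succ]; omega
    have e1 : (k+1) % N = 0 := by rw [e0]; exact Nat.mul_mod_right _ _
    have e2 : (k+1) / N = q + 1 := by rw [e0]; exact Nat.mul_div_cancel_left _ hN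
    rw [e1, e2]
    unfold F
    split_ifs <;> first | rfl | omega | (apply modeq_aux; omega)

lemma cyc_eq {α : Type*} (n : ℕ) (hn : 0 < n) (l : ZMod (2*n) → α) (k : ℕ) (i : ZMod (2*n)) :
    cycList l k i = l ((F n (k / (2*n)) (k % (2*n)) i.val : ℕ) : ZMod (2*n)) := by
  haveI : NeZero (2*n) := ⟨by omega⟩
  induction k generalizing i with
  | zero =>
    simp only [cycList, Nat.zero_div, Nat.zero_mod]
    have : F n 0 0 i.val = i.val := by
      unfold F
      have hv : i.val < 2*n := ZMod.val_lt i
      split_ifs with h1 h2 <;> [skip; omega; skip]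
      · omega  -- wrong: if i.val = 0 result 0 = i.val
      · rw [Nat.add_zero, Nat.mod_eq_of_lt (by omega)]; omega
    rw [this, ZMod.natCast_val, ZMod.cast_id]
  | succ k ih =>
    have hswap : cycList l (k+1) i
        = cycList l k (Equiv.swap ((k : ℕ) : ZMod (2*n)) ((k+1 : ℕ) : ZMod (2*n)) i) := rfl
    rw [hswap, ih]
    congr 1
    have hvk : ((k : ℕ) : ZMod (2*n)).val = k % (2*n) := ZMod.val_natCast _ k
    have hvk1 : ((k+1 : ℕ) : ZMod (2*n)).val = (k+1) % (2*n) := ZMod.val_natCast _ (k+1)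
    have hval : (Equiv.swap ((k : ℕ) : ZMod (2*n)) ((k+1 : ℕ) : ZMod (2*n)) i).val
        = (if i.val = k % (2*n) then (k+1) % (2*n) else if i.val = (k+1) % (2*n) then k % (2*n) else i.val) := by
      have hik : (i = ((k:ℕ) : ZMod (2*n))) ↔ i.val = k % (2*n) := by
        rw [← hvk]; exact ⟨fun h => by rw [h], fun h => ZMod.val_injective _ h⟩
      have hik1 : (i = ((k+1:ℕ) : ZMod (2*n))) ↔ i.val = (k+1) % (2*n) := by
        rw [← hvk1]; exact ⟨fun h => by rw [h], fun h => ZMod.val_injective _ h⟩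
      simp only [← hik, ← hik1]
      rw [Equiv.swap_apply_def, apply_ite ZMod.val, apply_ite ZMod.val]
      split_ifs <;> first | exact hvk1 | exact hvk | rfl
    rw [Fstep n hn k i.val (ZMod.val_lt i), hval]

/-- negation-complement: `-1 - ↑j = ↑(2n-1-j)` for `j < 2n` -/
lemma neg_one_sub_cast (n : ℕ) (hn : 0 < n) (j : ℕ) (hj : j < 2*n) :
    (-1 - ((j:ℕ) : ZMod (2*n))) = ((2*n-1-j : ℕ) : ZMod (2*n)) := by
  have h2 : ((2*n-1-j : ℕ) : ZMod (2*n)) + ((j+1 : ℕ) : ZMod (2*n)) = 0 := by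
    rw [← Nat.cast_add, (show (2*n-1-j) + (j+1) = 2*n by omega), ZMod.natCast_self]
  push_cast at h2
  linear_combination -h2

lemma plumbing {α : Type*} [DecidableEq α] (n : ℕ) (hn : 0 < n)
    (l : ZMod (2*n) → α) (hinj : Function.Injective l)
    (q' r p : ℕ) (X Y Z : ZMod (2*n))
    (hq' : q' < 2*n-1) (hr : r < 2*n) (hp : p < r) (hpr : p + r < 2*n-1)
    (hX : X = ((F n q' r (2*n-1-r) : ℕ) : ZMod (2*n)))
    (hZc : Z = ((F n q' r p : ℕ) : ZMod (2*n)))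
    (hYc : Y = ((F n q' r (2*n-1-p) : ℕ) : ZMod (2*n)))
    (hY0 : Y ≠ 0) (hZ0 : Z ≠ 0) :
    ∃ k ≤ 2*n*(2*n-1), ({l 0, l X, l Y, l Z} : Finset α) ∈ quartets (cycList l k) := by
  haveI : NeZero (2*n) := ⟨by omega⟩
  refine ⟨2*n*q' + r, ?_, ?_⟩
  · calc 2*n*q' + r ≤ 2*n*(2*n-1-1) + (2*n-1) :=
          Nat.add_le_add (Nat.mul_le_mul_left _ (by omega)) (by omega)
      _ ≤ 2*n*(2*n-1-1) + 2*n := Nat.add_le_add_left (by omega) _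
      _ = 2*n*((2*n-1-1)+1) := (Nat.mul_succ _ _).symm
      _ = 2*n*(2*n-1) := by congr 1; omega
  · set k := 2*n*q' + r with hk
    have ediv : k / (2*n) = q' := by
      rw [hk, Nat.mul_add_div (by omega), Nat.div_eq_of_lt hr, Nat.add_zero]
    have emod : k % (2*n) = r := by
      rw [hk, Nat.mul_add_mod, Nat.mod_eq_of_lt hr]
    have hcyc : ∀ j : ZMod (2*n), cycList l k j = l ((F n q' r j.val : ℕ) : ZMod (2*n)) := by
      intro j; rw [cyc_eq n hn l k j, ediv, emod]
    have hvr : (((r:ℕ) : ZMod (2*n))).val = r := ZMod.val_cast_of_lt hr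
    have hvp : (((p:ℕ) : ZMod (2*n))).val = p := ZMod.val_cast_of_lt (by omega)
    have e1 : cycList l k ((r:ℕ) : ZMod (2*n)) = l 0 := by
      rw [hcyc, hvr]; norm_num [F]
    have e2 : cycList l k (-1 - ((r:ℕ) : ZMod (2*n))) = l X := by
      rw [neg_one_sub_cast n hn r hr, hcyc,
        ZMod.val_cast_of_lt (show 2*n-1-r < 2*n by omega), hX]
    have e3 : cycList l k ((p:ℕ) : ZMod (2*n)) = l Z := by
      rw [hcyc, hvp, hZc]
    have e4 : cycList l k (-1 - ((p:ℕ) : ZMod (2*n))) = l Y := by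
      rw [neg_one_sub_cast n hn p (by omega), hcyc,
        ZMod.val_cast_of_lt (show 2*n-1-p < 2*n by omega), hYc]
    refine ⟨{l 0, l X}, ⟨((r:ℕ) : ZMod (2*n)), by rw [e1, e2]⟩,
           {l Y, l Z}, ⟨((p:ℕ) : ZMod (2*n)), by rw [e3, e4]; exact Finset.pair_comm _ _⟩, ?_, ?_⟩
    · intro hcontra
      have : l 0 ∈ ({l Y, l Z} : Finset α) := by rw [← hcontra]; simp
      simp only [Finset.mem_insert, Finset.mem_singleton] at this
      rcases this with h | h
      · exact hY0 (hinj h.symm)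
      · exact hZ0 (hinj h.symm)
    · ext x
      simp only [Finset.mem_union, Finset.mem_insert, Finset.mem_singleton]
      tauto

private lemma cast_ne_zero_of_val (n a : ℕ) (h1 : 0 < a) (h2 : a < 2*n) :
    ((a : ℕ) : ZMod (2*n)) ≠ 0 := by
  haveI : NeZero (2*n) := ⟨by omega⟩
  intro h
  have := congrArg ZMod.val h
  rw [ZMod.val_cast_of_lt h2, ZMod.val_zero] at this
  omega

lemma core2 {α : Type*} [DecidableEq α] (n : ℕ) (hn : 2 ≤ n)
    (l : ZMod (2*n) → α) (hinj : Function.Injective l)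
    (E u w : ℕ) (X Y Z : ZMod (2*n))
    (hE : E < 2*n-1) (hu : 1 ≤ u) (huw : u < w) (hw : w < 2*n-1)
    (hodd : (u+w) % 2 = 1)
    (hX : X = ((1+E : ℕ) : ZMod (2*n)))
    (hY : Y = ((1+(E+u)%(2*n-1) : ℕ) : ZMod (2*n)))
    (hZ : Z = ((1+(E+w)%(2*n-1) : ℕ) : ZMod (2*n))) :
    ∃ k ≤ 2*n*(2*n-1), ({l 0, l X, l Y, l Z} : Finset α) ∈ quartets (cycList l k) := by
  have hY0 : Y ≠ 0 := by
    rw [hY]; exact cast_ne_zero_of_val n _ (by omega)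
      (by have := Nat.mod_lt (E+u) (show 0 < 2*n-1 by omega); omega)
  have hZ0 : Z ≠ 0 := by
    rw [hZ]; exact cast_ne_zero_of_val n _ (by omega)
      (by have := Nat.mod_lt (E+w) (show 0 < 2*n-1 by omega); omega)
  rcases le_or_gt (u+w) (2*n-1) with hcase | hcase
  · -- case A : r = (u+w-1)/2 ≤ n-1, c0 = 2n-2-r
    obtain ⟨r, hrdef⟩ : ∃ r, r = (u+w-1)/2 := ⟨_, rfl⟩
    obtain ⟨p, hpdef⟩ : ∃ p, p = (w-u-1)/2 := ⟨_, rfl⟩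
    obtain ⟨c0, hc0def⟩ : ∃ c, c = 2*n-2-r := ⟨_, rfl⟩
    obtain ⟨q', hq'def⟩ : ∃ q, q = (E + (2*n-1) - c0) % (2*n-1) := ⟨_, rfl⟩
    have hr1 : 1 ≤ r ∧ r ≤ n-1 := by constructor <;> omega
    have hFr : F n q' r (2*n-1-r) = 1 + E := by
      unfold F
      rw [if_neg (by omega), if_neg (by omega)]
      have h1 : 2*n-1-r-1 + q' = c0 + ((E + (2*n-1) - c0) % (2*n-1)) := by omega
      rw [h1, Nat.add_mod_mod, (show c0 + (E + (2*n-1) - c0) = E + 1*(2*n-1) by omega),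
        Nat.add_mul_mod_self_right, Nat.mod_eq_of_lt hE]
      omega
    have hFp : F n q' r p = 1 + (E+w)%(2*n-1) := by
      unfold F
      rw [if_neg (by omega), if_pos (by omega)]
      rw [hq'def, Nat.add_mod_mod, (show p + (E + (2*n-1) - c0) = (E + w) + 0*(2*n-1) by omega),
        Nat.add_mul_mod_self_right]
      omega
    have hFq : F n q' r (2*n-1-p) = 1 + (E+u)%(2*n-1) := by
      unfold F
      rw [if_neg (by omega), if_neg (by omega)]
      rw [(show 2*n-1-p-1 + q' = 2*n-2-p + q' by omega), hq'def, Nat.add_mod_mod,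
        (show 2*n-2-p + (E + (2*n-1) - c0) = (E + u) + 1*(2*n-1) by omega),
        Nat.add_mul_mod_self_right]
      omega
    have hq'lt : q' < 2*n-1 := by rw [hq'def]; exact Nat.mod_lt _ (by omega)
    exact plumbing n (by omega) l hinj q' r p X Y Z
      hq'lt (by omega) (by omega) (by omega)
      (by rw [hX, hFr]) (by rw [hZ, hFp]) (by rw [hY, hFq]) hY0 hZ0
  · -- case C : r = (u+w+1)/2 ≥ n+1, c0 = 2n-1-r
    obtain ⟨r, hrdef⟩ : ∃ r, r = (u+w+1)/2 := ⟨_, rfl⟩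
    obtain ⟨p, hpdef⟩ : ∃ p, p = (w-u-1)/2 := ⟨_, rfl⟩
    obtain ⟨c0, hc0def⟩ : ∃ c, c = 2*n-1-r := ⟨_, rfl⟩
    obtain ⟨q', hq'def⟩ : ∃ q, q = (E + (2*n-1) - c0) % (2*n-1) := ⟨_, rfl⟩
    have hr1 : n+1 ≤ r ∧ r ≤ 2*n-2 := by constructor <;> omega
    have hFr : F n q' r (2*n-1-r) = 1 + E := by
      unfold F
      rw [if_neg (by omega), if_pos (by omega)]
      rw [(show 2*n-1-r + q' = c0 + q' by omega), hq'def, Nat.add_mod_mod,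
        (show c0 + (E + (2*n-1) - c0) = E + 1*(2*n-1) by omega),
        Nat.add_mul_mod_self_right, Nat.mod_eq_of_lt hE]
      omega
    have hFp : F n q' r p = 1 + (E+w)%(2*n-1) := by
      unfold F
      rw [if_neg (by omega), if_pos (by omega)]
      rw [hq'def, Nat.add_mod_mod, (show p + (E + (2*n-1) - c0) = (E + w) + 0*(2*n-1) by omega),
        Nat.add_mul_mod_self_right]
      omega
    have hFq : F n q' r (2*n-1-p) = 1 + (E+u)%(2*n-1) := by
      unfold F
      rw [if_neg (by omega), if_neg (by omega)]
      rw [(show 2*n-1-p-1 + q' = 2*n-2-p + q' by omega), hq'def, Nat.add_mod_mod,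
        (show 2*n-2-p + (E + (2*n-1) - c0) = (E + u) + 1*(2*n-1) by omega),
        Nat.add_mul_mod_self_right]
      omega
    have hq'lt : q' < 2*n-1 := by rw [hq'def]; exact Nat.mod_lt _ (by omega)
    exact plumbing n (by omega) l hinj q' r p X Y Z
      hq'lt (by omega) (by omega) (by omega)
      (by rw [hX, hFr]) (by rw [hZ, hFp]) (by rw [hY, hFq]) hY0 hZ0

lemma main_aux {α : Type*} [DecidableEq α] (n : ℕ) (hn : 2 ≤ n)
    (l : ZMod (2*n) → α) (hinj : Function.Injective l)
    (P1 P2 P3 : ZMod (2*n)) (f1 f2 f3 : ℕ)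
    (h1 : P1.val = 1 + f1) (h2 : P2.val = 1 + f2) (h3 : P3.val = 1 + f3)
    (o12 : f1 < f2) (o23 : f2 < f3) (hf3 : f3 < 2*n-1) :
    ∃ k ≤ 2*n*(2*n-1), ({l 0, l P1, l P2, l P3} : Finset α) ∈ quartets (cycList l k) := by
  haveI : NeZero (2*n) := ⟨by omega⟩
  have c1 : P1 = ((1+f1 : ℕ) : ZMod (2*n)) := by rw [← h1, ZMod.natCast_val, ZMod.cast_id]
  have c2 : P2 = ((1+f2 : ℕ) : ZMod (2*n)) := by rw [← h2, ZMod.natCast_val, ZMod.cast_id]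
  have c3 : P3 = ((1+f3 : ℕ) : ZMod (2*n)) := by rw [← h3, ZMod.natCast_val, ZMod.cast_id]
  by_cases hA : (f2+f3) % 2 = 1
  · refine core2 n hn l hinj f1 (f2-f1) (f3-f1) P1 P2 P3
      (by omega) (by omega) (by omega) (by omega) (by omega) c1 ?_ ?_
    · rw [c2]; congr 1
      rw [(show f1 + (f2-f1) = f2 by omega), Nat.mod_eq_of_lt (by omega)]
    · rw [c3]; congr 1
      rw [(show f1 + (f3-f1) = f3 by omega), Nat.mod_eq_of_lt (by omega)]
  · by_cases hB : (f1+f2) % 2 = 1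
    · obtain ⟨k, hk, hm⟩ := core2 n hn l hinj f3 (f1+(2*n-1)-f3) (f2+(2*n-1)-f3) P3 P1 P2
        (by omega) (by omega) (by omega) (by omega) (by omega) c3
        (by rw [c1]; congr 1
            rw [(show f3 + (f1+(2*n-1)-f3) = f1 + (2*n-1) by omega), Nat.add_mod_right,
              Nat.mod_eq_of_lt (by omega)])
        (by rw [c2]; congr 1
            rw [(show f3 + (f2+(2*n-1)-f3) = f2 + (2*n-1) by omega), Nat.add_mod_right,
              Nat.mod_eq_of_lt (by omega)])
      refine ⟨k, hk, ?_⟩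
      have : ({l 0, l P3, l P1, l P2} : Finset α) = {l 0, l P1, l P2, l P3} := by
        ext x; simp only [Finset.mem_insert, Finset.mem_singleton]; tauto
      rwa [this] at hm
    · obtain ⟨k, hk, hm⟩ := core2 n hn l hinj f2 (f3-f2) (f1+(2*n-1)-f2) P2 P3 P1
        (by omega) (by omega) (by omega) (by omega) (by omega) c2
        (by rw [c3]; congr 1
            rw [(show f2 + (f3-f2) = f3 by omega), Nat.mod_eq_of_lt (by omega)])
        (by rw [c1]; congr 1
            rw [(show f2 + (f1+(2*n-1)-f2) = f1 + (2*n-1) by omega), Nat.add_mod_right,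
              Nat.mod_eq_of_lt (by omega)])
      refine ⟨k, hk, ?_⟩
      have : ({l 0, l P2, l P3, l P1} : Finset α) = {l 0, l P1, l P2, l P3} := by
        ext x; simp only [Finset.mem_insert, Finset.mem_singleton]; tauto
      rwa [this] at hm

set_option maxHeartbeats 1000000 in
/-- For a list `l = (a, b_0, …, b_{2n-2})` of `2n` distinct
elements, the union over `0 ≤ k ≤ 2n(2n−1)` of the quartet sets `F(l^k)`
contains every 4-element subset of the elements that includes the
distinguished element `a = l 0`. -/
theorem cyclic_algorithm_covers_quartets
    {α : Type*} [DecidableEq α] (n : ℕ) (hn : 0 < n)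
    (l : ZMod (2 * n) → α) (hinj : Function.Injective l)
    (t : Finset α) (hcard : t.card = 4) (ha : l 0 ∈ t)
    (hsub : ↑t ⊆ Set.range l) :
    ∃ k ≤ 2 * n * (2 * n - 1), t ∈ quartets (cycList l k) := by
  haveI : NeZero (2*n) := ⟨by omega⟩
  have h3card : (t.erase (l 0)).card = 3 := by
    rw [Finset.card_erase_of_mem ha, hcard]
  obtain ⟨b, c, d, hbc, hbd, hcd, he⟩ := Finset.card_eq_three.mp h3card
  have hbmem : b ∈ t.erase (l 0) := by rw [he]; simp
  have hcmem : c ∈ t.erase (l 0) := by rw [he]; simp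
  have hdmem : d ∈ t.erase (l 0) := by rw [he]; simp
  obtain ⟨B, hB⟩ := hsub (Finset.mem_coe.mpr (Finset.mem_of_mem_erase hbmem))
  obtain ⟨C, hC⟩ := hsub (Finset.mem_coe.mpr (Finset.mem_of_mem_erase hcmem))
  obtain ⟨D, hD⟩ := hsub (Finset.mem_coe.mpr (Finset.mem_of_mem_erase hdmem))
  have hB0 : B ≠ 0 := fun h => (Finset.ne_of_mem_erase hbmem) (by rw [← hB, h])
  have hC0 : C ≠ 0 := fun h => (Finset.ne_of_mem_erase hcmem) (by rw [← hC, h])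
  have hD0 : D ≠ 0 := fun h => (Finset.ne_of_mem_erase hdmem) (by rw [← hD, h])
  have hBC : B ≠ C := fun h => hbc (by rw [← hB, ← hC, h])
  have hBD : B ≠ D := fun h => hbd (by rw [← hB, ← hD, h])
  have hCD : C ≠ D := fun h => hcd (by rw [← hC, ← hD, h])
  have hvB0 : B.val ≠ 0 := fun h => hB0 ((ZMod.val_eq_zero B).mp h)
  have hvC0 : C.val ≠ 0 := fun h => hC0 ((ZMod.val_eq_zero C).mp h)
  have hvD0 : D.val ≠ 0 := fun h => hD0 ((ZMod.val_eq_zero D).mp h)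
  have hvBC : B.val ≠ C.val := fun h => hBC (ZMod.val_injective _ h)
  have hvBD : B.val ≠ D.val := fun h => hBD (ZMod.val_injective _ h)
  have hvCD : C.val ≠ D.val := fun h => hCD (ZMod.val_injective _ h)
  have hltB : B.val < 2*n := ZMod.val_lt B
  have hltC : C.val < 2*n := ZMod.val_lt C
  have hltD : D.val < 2*n := ZMod.val_lt D
  have hn2 : 2 ≤ n := by omega
  have hvB : B.val = 1 + (B.val - 1) := by omega
  have hvC : C.val = 1 + (C.val - 1) := by omega
  have hvD : D.val = 1 + (D.val - 1) := by omega
  have ht2 : t = {l 0, l B, l C, l D} := by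
    rw [hB, hC, hD, ← he, Finset.insert_erase ha]
  have perm : ∀ x y z : ZMod (2*n),
      ({l 0, l x, l y, l z} : Finset α) = {l 0, l B, l C, l D} →
      (∃ k ≤ 2 * n * (2 * n - 1),
        ({l 0, l x, l y, l z} : Finset α) ∈ quartets (cycList l k)) →
      ∃ k ≤ 2 * n * (2 * n - 1), t ∈ quartets (cycList l k) := by
    intro x y z hperm ⟨k, hk, hm⟩
    exact ⟨k, hk, by rw [ht2, ← hperm]; exact hm⟩
  rcases lt_trichotomy (B.val) (C.val) with h1 | h1 | h1
  · rcases lt_trichotomy (C.val) (D.val) with h2 | h2 | h2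
    · -- B < C < D
      exact perm B C D rfl
        (main_aux n hn2 l hinj B C D (B.val - 1) (C.val - 1) (D.val - 1) hvB hvC hvD (by omega) (by omega) (by omega))
    · exact absurd h2 hvCD
    · rcases lt_trichotomy (B.val) (D.val) with h3 | h3 | h3
      · -- B < D < C
        exact perm B D C (by ext x; simp only [Finset.mem_insert, Finset.mem_singleton]; tauto)
          (main_aux n hn2 l hinj B D C (B.val - 1) (D.val - 1) (C.val - 1) hvB hvD hvC (by omega) (by omega) (by omega))
      · exact absurd h3 hvBD
      · -- D < B < C
        exact perm D B C (by ext x; simp only [Finset.mem_insert, Finset.mem_singleton]; tauto)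
          (main_aux n hn2 l hinj D B C (D.val - 1) (B.val - 1) (C.val - 1) hvD hvB hvC (by omega) (by omega) (by omega))
  · exact absurd h1 hvBC
  · rcases lt_trichotomy (B.val) (D.val) with h2 | h2 | h2
    · -- C < B < D
      exact perm C B D (by ext x; simp only [Finset.mem_insert, Finset.mem_singleton]; tauto)
        (main_aux n hn2 l hinj C B D (C.val - 1) (B.val - 1) (D.val - 1) hvC hvB hvD (by omega) (by omega) (by omega))
    · exact absurd h2 hvBD
    · rcases lt_trichotomy (C.val) (D.val) with h3 | h3 | h3
      · -- C < D < B
        exact perm C D B (by ext x; simp only [Finset.mem_insert, Finset.mem_singleton]; tauto)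
          (main_aux n hn2 l hinj C D B (C.val - 1) (D.val - 1) (B.val - 1) hvC hvD hvB (by omega) (by omega) (by omega))
      · exact absurd h3 hvCD
      · -- D < C < B
        exact perm D C B (by ext x; simp only [Finset.mem_insert, Finset.mem_singleton]; tauto)
          (main_aux n hn2 l hinj D C B (D.val - 1) (C.val - 1) (B.val - 1) hvD hvC hvB (by omega) (by omega) (by omega))
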